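/- arXiv:1204.2997 — 2 statements merged into one kernel-verified Lean document; each statement's English description precedes it below -/
import Mathlib

section
/- For every 1 ≤ k ≤ n−1, the hyperbolicity cone of e_{k+1}(x_1,…,x_n) with respect to 1 = (1,…,1) is contained in the hyperbolicity cone of e_k with respect to 1: Λ₊(e_{k+1}, 1) ⊆ Λ₊(e_k, 1). -/
open MvPolynomial

/-- The `k`-th elementary symmetric polynomial in the variables indexed by the finite set `S`. -/
noncomputable def esymmS {n : ℕ} (S : Finset (Fin n)) (k : ℕ) : MvPolynomial (Fin n) ℝ :=
  ∑ T ∈ S.powersetCard k, ∏ j ∈ T, X j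

/-- The hyperbolicity cone: the closure of the connected component of `{x : h(x) ≠ 0}`
containing `e`. -/
noncomputable def hypCone {n : ℕ} (h : MvPolynomial (Fin n) ℝ) (e : Fin n → ℝ) :
    Set (Fin n → ℝ) :=
  closure (connectedComponentIn {x | eval x h ≠ 0} e)

lemma eval_esymmS {n : ℕ} (x : Fin n → ℝ) (S : Finset (Fin n)) (j : ℕ) :
    eval x (esymmS S j) = ∑ T ∈ S.powersetCard j, ∏ i ∈ T, x i := by
  simp [esymmS, eval_prod]

lemma multiset_sum_pos {s : Multiset ℝ} (h0 : ∀ a ∈ s, 0 < a) (hs : s ≠ 0) : 0 < s.sum := by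
  induction s using Multiset.induction_on with
  | empty => simp at hs
  | cons a t ih =>
    rw [Multiset.sum_cons]
    have ha : 0 < a := h0 a (Multiset.mem_cons_self a t)
    rcases eq_or_ne t 0 with rfl | ht
    · simpa using ha
    · exact add_pos ha (ih (fun b hb => h0 b (Multiset.mem_cons_of_mem hb)) ht)

lemma multiset_esymm_pos {s : Multiset ℝ} (h0 : ∀ a ∈ s, 0 < a) {j : ℕ}
    (hj : j ≤ Multiset.card s) : 0 < s.esymm j := by
  apply multiset_sum_pos
  · intro a ha
    rw [Multiset.mem_map] at ha
    obtain ⟨t, ht, rfl⟩ := ha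
    rw [Multiset.mem_powersetCard] at ht
    exact Multiset.prod_pos (fun b hb => h0 b (Multiset.mem_of_le ht.1 hb))
  · intro h
    rw [Multiset.map_eq_zero] at h
    have hc := Multiset.card_powersetCard j s
    rw [h, Multiset.card_zero] at hc
    exact absurd hc.symm (Nat.choose_pos hj).ne'

/-- Iterated derivatives of a real-rooted polynomial are real-rooted (by Rolle's theorem). -/
lemma iterate_derivative_real_rooted (p : Polynomial ℝ)
    (h : Multiset.card p.roots = p.natDegree) (m : ℕ) :
    Multiset.card ((Polynomial.derivative)^[m] p).roots
      = ((Polynomial.derivative)^[m] p).natDegree ∧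
    ((Polynomial.derivative)^[m] p).natDegree = p.natDegree - m := by
  induction m with
  | zero => simpa using h
  | succ m ih =>
    rw [Function.iterate_succ_apply']
    have h1 := Polynomial.card_roots_le_derivative ((Polynomial.derivative)^[m] p)
    have h2 := Polynomial.card_roots' (Polynomial.derivative ((Polynomial.derivative)^[m] p))
    have h3 := Polynomial.natDegree_derivative_le ((Polynomial.derivative)^[m] p)
    omega

/-- If `e_0(x), …, e_{k+1}(x)` are all nonnegative and `e_{k+1}(x) ≠ 0`, then
they are all (strictly) positive. -/
lemma esymm_eval_pos {n k : ℕ} (hkn : k + 1 ≤ n) (x : Fin n → ℝ)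
    (hnn : ∀ j, j ≤ k + 1 → 0 ≤ eval x (esymmS (Finset.univ : Finset (Fin n)) j))
    (hne : eval x (esymmS (Finset.univ : Finset (Fin n)) (k + 1)) ≠ 0) :
    ∀ j, j ≤ k + 1 → 0 < eval x (esymmS (Finset.univ : Finset (Fin n)) j) := by
  classical
  set p : Polynomial ℝ := ∏ i : Fin n, (Polynomial.X + Polynomial.C (x i)) with hp
  have hmon : p.Monic :=
    Polynomial.monic_prod_of_monic _ _ (fun i _ => Polynomial.monic_X_add_C (x i))
  have hdeg : p.natDegree = n := by
    rw [hp, Polynomial.natDegree_prod_of_monic _ _ (fun i _ => Polynomial.monic_X_add_C (x i))]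
    simp [Polynomial.natDegree_X_add_C]
  have hroots : Multiset.card p.roots = n := by
    rw [hp, Polynomial.roots_prod _ _ (by rw [← hp]; exact hmon.ne_zero)]
    rw [Multiset.card_bind]
    have h1 : ∀ i : Fin n, Multiset.card ((Polynomial.X + Polynomial.C (x i)).roots) = 1 := by
      intro i
      rw [show Polynomial.X + Polynomial.C (x i) = Polynomial.X - Polynomial.C (-(x i)) by
        rw [map_neg, sub_neg_eq_add], Polynomial.roots_X_sub_C]
      rfl
    simp [h1]
  have hcoeffp : ∀ j, j ≤ n → p.coeff (n - j) = eval x (esymmS Finset.univ j) := by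
    intro j hj
    rw [hp, Finset.prod_X_add_C_coeff Finset.univ x
      (by simp only [Finset.card_univ, Fintype.card_fin]; omega)]
    rw [eval_esymmS]
    congr 1
    simp only [Finset.card_univ, Fintype.card_fin]
    congr 1
    omega
  set m0 := n - (k + 1) with hm0
  set g : Polynomial ℝ := (Polynomial.derivative)^[m0] p with hg
  obtain ⟨hgroots, hgdeg'⟩ := iterate_derivative_real_rooted p (by rw [hdeg]; exact hroots) m0
  rw [← hg] at hgroots hgdeg'
  have hgdeg : g.natDegree = k + 1 := by rw [hgdeg', hdeg]; omega
  have hco : ∀ i, i ≤ k + 1 →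
      g.coeff i = ((i + m0).descFactorial m0 : ℝ) * eval x (esymmS Finset.univ (k + 1 - i)) := by
    intro i hi
    rw [hg, Polynomial.coeff_iterate_derivative, nsmul_eq_mul]
    congr 1
    have h1 : i + m0 = n - (k + 1 - i) := by omega
    rw [h1, hcoeffp (k + 1 - i) (by omega)]
  have hcpos : ∀ i : ℕ, (0 : ℝ) < ((i + m0).descFactorial m0 : ℝ) := by
    intro i
    have : (i + m0).descFactorial m0 ≠ 0 := by
      rw [Ne, Nat.descFactorial_eq_zero_iff_lt]; omega
    exact_mod_cast Nat.pos_of_ne_zero this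
  have hnnc : ∀ i, 0 ≤ g.coeff i := by
    intro i
    rcases le_or_gt i (k + 1) with hi | hi
    · rw [hco i hi]
      exact mul_nonneg (hcpos i).le (hnn _ (by omega))
    · rw [Polynomial.coeff_eq_zero_of_natDegree_lt (by omega)]
  have hc0 : 0 < g.coeff 0 := by
    rw [hco 0 (by omega)]
    have h1 := hnn (k + 1) le_rfl
    have h2 := hcpos 0
    rcases h1.lt_or_eq with h | h
    · positivity
    · exact absurd h.symm (by simpa using hne)
  have hgne : g ≠ 0 := fun h => by simp [h] at hc0
  have hneg : ∀ r ∈ g.roots, r < 0 := by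
    intro r hr
    by_contra hr0
    push_neg at hr0
    have heval : Polynomial.eval r g = 0 := ((Polynomial.mem_roots hgne).mp hr)
    have hpos : 0 < Polynomial.eval r g := by
      rw [Polynomial.eval_eq_sum_range]
      have h0mem : 0 ∈ Finset.range (g.natDegree + 1) := by simp
      calc (0:ℝ) < g.coeff 0 * r ^ 0 := by simpa using hc0
        _ ≤ ∑ i ∈ Finset.range (g.natDegree + 1), g.coeff i * r ^ i :=
          Finset.single_le_sum (fun i _ => mul_nonneg (hnnc i) (pow_nonneg hr0 i)) h0mem
    linarith
  have hlead : 0 < g.leadingCoeff := by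
    rw [Polynomial.leadingCoeff, hgdeg, hco (k + 1) le_rfl]
    have hE0 : eval x (esymmS (Finset.univ : Finset (Fin n)) 0) = 1 := by
      simp [eval_esymmS]
    rw [Nat.sub_self, hE0, mul_one]
    exact hcpos _
  intro j hj
  have hi : k + 1 - j ≤ k + 1 := by omega
  have hji : k + 1 - (k + 1 - j) = j := by omega
  have hcoeff2 := Polynomial.coeff_eq_esymm_roots_of_card hgroots
    (show k + 1 - j ≤ g.natDegree by omega)
  have hesym : 0 < (-1 : ℝ) ^ (g.natDegree - (k + 1 - j))
      * g.roots.esymm (g.natDegree - (k + 1 - j)) := by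
    rw [← Multiset.esymm_neg]
    apply multiset_esymm_pos
    · intro a ha
      rw [Multiset.mem_map] at ha
      obtain ⟨r, hr, rfl⟩ := ha
      simpa using hneg r hr
    · rw [Multiset.card_map, hgroots]
      omega
  have hcoeffpos : 0 < g.coeff (k + 1 - j) := by
    rw [hcoeff2, mul_assoc]
    exact mul_pos hlead hesym
  rw [hco _ hi, hji] at hcoeffpos
  have := hcpos (k + 1 - j)
  nlinarith

/-- For `1 ≤ k ≤ n-1`, `Λ₊(e_{k+1}, 1) ⊆ Λ₊(e_k, 1)`. -/
theorem hypCone_esymm_succ_subset {n : ℕ} (k : ℕ) (hk : 1 ≤ k) (hkn : k ≤ n - 1) :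
    hypCone (esymmS (Finset.univ : Finset (Fin n)) (k + 1)) 1 ⊆
      hypCone (esymmS (Finset.univ : Finset (Fin n)) k) 1 := by
  have hn : k + 1 ≤ n := by omega
  have hpos1 : ∀ j, j ≤ n → 0 < eval (1 : Fin n → ℝ) (esymmS Finset.univ j) := by
    intro j hj
    have : eval (1 : Fin n → ℝ) (esymmS Finset.univ j) = ((n.choose j : ℕ) : ℝ) := by
      rw [eval_esymmS]
      simp [Finset.card_powersetCard]
    rw [this]
    exact_mod_cast Nat.choose_pos hj
  set F1 : Set (Fin n → ℝ) := {x | eval x (esymmS (Finset.univ : Finset (Fin n)) (k + 1)) ≠ 0}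
  set S : Set (Fin n → ℝ) := connectedComponentIn F1 1 with hS
  have h1F : (1 : Fin n → ℝ) ∈ F1 := ne_of_gt (hpos1 (k + 1) hn)
  have h1S : (1 : Fin n → ℝ) ∈ S := mem_connectedComponentIn h1F
  set U : Set (Fin n → ℝ) :=
    ⋂ j ∈ Finset.range (k + 2), {x | 0 < eval x (esymmS (Finset.univ : Finset (Fin n)) j)} with hU
  set V : Set (Fin n → ℝ) :=
    ⋃ j ∈ Finset.range (k + 2), {x | eval x (esymmS (Finset.univ : Finset (Fin n)) j) < 0} with hV
  have hUopen : IsOpen U :=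
    isOpen_biInter_finset fun j _ =>
      isOpen_lt continuous_const (MvPolynomial.continuous_eval _)
  have hVopen : IsOpen V :=
    isOpen_biUnion fun j _ =>
      isOpen_lt (MvPolynomial.continuous_eval _) continuous_const
  have hdisj : Disjoint U V := by
    rw [Set.disjoint_left]
    intro x hxU hxV
    rw [hV, Set.mem_iUnion₂] at hxV
    obtain ⟨j, hj, hxj⟩ := hxV
    rw [hU, Set.mem_iInter₂] at hxU
    exact absurd (hxU j hj) (by simp only [Set.mem_setOf_eq] at hxj ⊢; linarith)
  have hsub : S ⊆ U ∪ V := by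
    intro x hx
    by_cases hcase : ∀ j, j ≤ k + 1 → 0 ≤ eval x (esymmS (Finset.univ : Finset (Fin n)) j)
    · left
      rw [hU, Set.mem_iInter₂]
      intro j hj
      exact esymm_eval_pos hn x hcase (connectedComponentIn_subset F1 1 hx) j
        (by simp only [Finset.mem_range] at hj; omega)
    · right
      push_neg at hcase
      obtain ⟨j, hj, hxj⟩ := hcase
      rw [hV, Set.mem_iUnion₂]
      exact ⟨j, by simp only [Finset.mem_range]; omega, by simpa using hxj⟩
  have hSU : S ⊆ U := by
    apply IsPreconnected.subset_left_of_subset_union hUopen hVopen hdisj hsub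
      ⟨1, h1S, ?_⟩ isPreconnected_connectedComponentIn
    rw [hU, Set.mem_iInter₂]
    intro j hj
    exact hpos1 j (by simp only [Finset.mem_range] at hj; omega)
  have hSk : S ⊆ {x | eval x (esymmS (Finset.univ : Finset (Fin n)) k) ≠ 0} := by
    intro x hx
    have := hSU hx
    rw [hU, Set.mem_iInter₂] at this
    exact ne_of_gt (this k (by simp only [Finset.mem_range]; omega))
  have hfin : S ⊆
      connectedComponentIn {x | eval x (esymmS (Finset.univ : Finset (Fin n)) k) ≠ 0} 1 :=
    isPreconnected_connectedComponentIn.subset_connectedComponentIn h1S hSk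
  exact closure_mono hfin
end

section
/- For 1 ≤ k ≤ n−1 and any subset S ⊆ [n] with |S| ≤ k−1, the hyperbolicity cone of e_{k+1}(x_1,…,x_n) with respect to 1 is contained in the hyperbolicity cone of the polynomial ∂^S e_k (which equals e_{k−|S|} in the variables indexed by [n]\S). -/
open MvPolynomial

/-- The partial derivative operator `∂^S = ∏_{j∈S} ∂/∂x_j`. -/
noncomputable def pderivS {n : ℕ} (S : Finset (Fin n)) (p : MvPolynomial (Fin n) ℝ) :
    MvPolynomial (Fin n) ℝ :=
  S.toList.foldr (fun j q => pderiv j q) p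

section Aux
open Polynomial Finset

noncomputable def esum {α : Type*} [DecidableEq α] (T : Finset α) (y : α → ℝ) (r : ℕ) : ℝ :=
  ∑ A ∈ T.powersetCard r, ∏ i ∈ A, y i

section esumBasic
variable {α : Type*} [DecidableEq α] (T : Finset α) (y : α → ℝ)

lemma esum_insert {a : α} (ha : a ∉ T) (r : ℕ) :
    esum (insert a T) y (r+1) = esum T y (r+1) + y a * esum T y r := by
  rw [esum, Finset.powersetCard_succ_insert ha, Finset.sum_union]
  · congr 1
    rw [Finset.sum_image (fun A hA B hB h => ?_), esum, Finset.mul_sum]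
    · refine Finset.sum_congr rfl fun A hA => ?_
      rw [Finset.mem_powersetCard] at hA
      rw [Finset.prod_insert (fun hc => ha (hA.1 hc))]
    · have hA' : a ∉ A := fun hc => ha ((Finset.mem_powersetCard.1 hA).1 hc)
      have hB' : a ∉ B := fun hc => ha ((Finset.mem_powersetCard.1 hB).1 hc)
      rw [← Finset.erase_insert hA', ← Finset.erase_insert hB', h]
  · -- disjoint
    rw [Finset.disjoint_left]
    intro A hA hA'
    rw [Finset.mem_powersetCard] at hA
    obtain ⟨B, hB, rfl⟩ := Finset.mem_image.1 hA'
    exact ha (hA.1 (Finset.mem_insert_self a B))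

lemma powersetCard_erase (i : α) (r : ℕ) :
    (T.erase i).powersetCard r = (T.powersetCard r).filter (fun A => i ∉ A) := by
  ext A
  simp only [Finset.mem_powersetCard, Finset.mem_filter, Finset.subset_erase]
  tauto

lemma esum_sum_erase (r : ℕ) :
    ∑ i ∈ T, esum (T.erase i) y r = ((T.card - r : ℕ) : ℝ) * esum T y r := by
  have : ∀ i, esum (T.erase i) y r
      = ∑ A ∈ T.powersetCard r, if i ∉ A then ∏ j ∈ A, y j else 0 := by
    intro i
    rw [esum, powersetCard_erase, Finset.sum_filter]
  simp only [this]
  rw [Finset.sum_comm, esum, Finset.mul_sum]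
  refine Finset.sum_congr rfl fun A hA => ?_
  rw [Finset.mem_powersetCard] at hA
  rw [← Finset.sum_filter, Finset.sum_const, ← Finset.sdiff_eq_filter,
    Finset.card_sdiff_of_subset hA.1, hA.2, nsmul_eq_mul, mul_comm]
end esumBasic

section esumBasic2
variable {α : Type*} [DecidableEq α] (T : Finset α) (y : α → ℝ)

lemma esum_zero : esum T y 0 = 1 := by
  simp [esum, Finset.powersetCard_zero]

lemma esum_of_card_lt {r : ℕ} (h : T.card < r) : esum T y r = 0 := by
  simp [esum, Finset.powersetCard_eq_empty.2 h]

lemma esum_card : esum T y T.card = ∏ i ∈ T, y i := by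
  rw [esum, Finset.powersetCard_self, Finset.sum_singleton]

end esumBasic2

section Kprime
variable {α : Type*} [DecidableEq α]

lemma esum_card_sub_one (T : Finset α) (y : α → ℝ) (h : 1 ≤ T.card) :
    esum T y (T.card - 1) = ∑ i ∈ T, ∏ j ∈ T.erase i, y j := by
  have h2 := esum_sum_erase T y (T.card - 1)
  rw [Nat.sub_sub_self h] at h2
  push_cast at h2
  rw [one_mul] at h2
  rw [← h2]
  refine Finset.sum_congr rfl fun i hi => ?_
  rw [← Finset.card_erase_of_mem hi, esum_card]

lemma esum_card_sub_two (T : Finset α) (y : α → ℝ) (h : 2 ≤ T.card) :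
    2 * esum T y (T.card - 2) = ∑ i ∈ T, ∑ t ∈ T.erase i, ∏ j ∈ (T.erase i).erase t, y j := by
  have h2 := esum_sum_erase T y (T.card - 2)
  rw [Nat.sub_sub_self h] at h2
  push_cast at h2
  rw [← h2]
  refine Finset.sum_congr rfl fun i hi => ?_
  have hce : (T.erase i).card = T.card - 1 := Finset.card_erase_of_mem hi
  have h1e : 1 ≤ (T.erase i).card := by omega
  have : T.card - 2 = (T.erase i).card - 1 := by omega
  rw [this, esum_card_sub_one _ _ h1e]

lemma lemKprime (T : Finset α) (y : α → ℝ) (hc : 2 ≤ T.card)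
    (h1 : esum T y (T.card - 1) = 0) (h2 : 0 ≤ esum T y (T.card - 2)) :
    esum T y T.card ≤ 0 := by
  by_contra hP
  push_neg at hP
  rw [esum_card] at hP
  set P := ∏ i ∈ T, y i with hPdef
  have hy : ∀ i ∈ T, y i ≠ 0 := by
    intro i hi h0
    rw [hPdef, Finset.prod_eq_zero hi h0] at hP
    exact lt_irrefl 0 hP
  have hprod_erase : ∀ i ∈ T, ∏ j ∈ T.erase i, y j = P * (y i)⁻¹ := by
    intro i hi
    have h4 : y i * ∏ j ∈ T.erase i, y j = P := (Finset.mul_prod_erase T y hi).trans hPdef.symm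
    field_simp [hy i hi]
    rw [mul_comm]
    exact h4
  have hTne : T.Nonempty := Finset.card_pos.1 (by omega)
  -- sum of reciprocals is zero
  have hrecip : ∑ i ∈ T, (y i)⁻¹ = 0 := by
    rw [esum_card_sub_one T y (by omega)] at h1
    have : ∑ i ∈ T, ∏ j ∈ T.erase i, y j = P * ∑ i ∈ T, (y i)⁻¹ := by
      rw [Finset.mul_sum]
      exact Finset.sum_congr rfl hprod_erase
    rw [this] at h1
    rcases mul_eq_zero.1 h1 with h | h
    · exact absurd h (ne_of_gt hP)
    · exact h
  -- second symmetric function of reciprocals is negative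
  have key : 2 * esum T y (T.card - 2) = -P * ∑ i ∈ T, ((y i)⁻¹)^2 := by
    rw [esum_card_sub_two T y hc]
    have : ∀ i ∈ T, ∑ t ∈ T.erase i, ∏ j ∈ (T.erase i).erase t, y j
        = -(P * ((y i)⁻¹)^2) := by
      intro i hi
      have : ∀ t ∈ T.erase i, ∏ j ∈ (T.erase i).erase t, y j = P * (y i)⁻¹ * (y t)⁻¹ := by
        intro t ht
        have htT : t ∈ T := Finset.mem_of_mem_erase ht
        have hyt : y t ≠ 0 := hy t htT
        have h5 := Finset.mul_prod_erase (T.erase i) y ht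
        rw [hprod_erase i hi] at h5
        rw [← h5, mul_comm (y t), mul_assoc, mul_inv_cancel₀ hyt, mul_one]
      rw [Finset.sum_congr rfl this, ← Finset.mul_sum]
      have hsum : ∑ t ∈ T.erase i, (y t)⁻¹ = -(y i)⁻¹ := by
        have := Finset.sum_erase_eq_sub (f := fun t => (y t)⁻¹) hi
        rw [hrecip] at this
        rw [this]; ring
      rw [hsum]; ring
    rw [Finset.sum_congr rfl this, Finset.sum_neg_distrib]
    rw [← Finset.mul_sum]; ring
  have hpos : 0 < ∑ i ∈ T, ((y i)⁻¹)^2 :=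
    Finset.sum_pos (fun i hi => by
      have h0 : (y i)⁻¹ ≠ 0 := inv_ne_zero (hy i hi)
      positivity) hTne
  have : 2 * esum T y (T.card - 2) < 0 := by
    rw [key]
    have : 0 < P * ∑ i ∈ T, ((y i)⁻¹)^2 := mul_pos hP hpos
    linarith
  linarith

end Kprime

open MvPolynomial Polynomial Finset

-- helper: enumerate a multiset by a Fin-indexed function
lemma multiset_exists_fn {β : Type*} (m : ℕ) (s : Multiset β) (h : Multiset.card s = m) :
    ∃ y : Fin m → β, s = Finset.univ.val.map y := by
  obtain ⟨l, rfl⟩ := Quotient.exists_rep s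
  have hl : l.length = m := h
  subst hl
  refine ⟨l.get, ?_⟩
  rw [Fin.univ_val_map, List.ofFn_get]
  rfl

lemma esum_prod_X_add_C_coeff {α : Type*} [DecidableEq α] (T : Finset α) (x : α → ℝ)
    {r : ℕ} (h : r ≤ T.card) :
    (∏ i ∈ T, (Polynomial.X + Polynomial.C (x i))).coeff r = esum T x (T.card - r) :=
  Finset.prod_X_add_C_coeff T x h

section lemK
variable {α : Type*} [DecidableEq α]

lemma lemK (T : Finset α) (x : α → ℝ) (j : ℕ)
    (h1 : 0 ≤ esum T x j) (h2 : esum T x (j+1) = 0) : esum T x (j+2) ≤ 0 := by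
  by_cases hcard : T.card < j + 2
  · rw [esum_of_card_lt T x hcard]
  push_neg at hcard
  set ℓ := T.card with hℓdef
  set P : Polynomial ℝ := ∏ i ∈ T, (Polynomial.X + Polynomial.C (x i)) with hPdef
  have hPm : P.Monic := monic_prod_of_monic _ _ (fun i _ => monic_X_add_C (x i))
  have hPdeg : P.natDegree = ℓ := by
    rw [hPdef, natDegree_prod_of_monic _ _ (fun i _ => monic_X_add_C (x i))]
    simp [natDegree_X_add_C, hℓdef]
  have hProots : P.roots = T.val.map (fun i => -x i) := by
    have hP2 : P = ((T.val.map (fun i => -x i)).map (fun a => Polynomial.X - Polynomial.C a)).prod := by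
      rw [hPdef, Finset.prod_eq_multiset_prod, Multiset.map_map]
      congr 1
      apply Multiset.map_congr rfl
      intro i _
      simp [sub_neg_eq_add]
    rw [hP2, Polynomial.roots_multiset_prod_X_sub_C]
  have hProotsCard : Multiset.card P.roots = ℓ := by
    rw [hProots, Multiset.card_map]
    rfl
  set t := ℓ - (j + 2) with htdef
  have hℓt : j + 2 + t = ℓ := by omega
  set g := Polynomial.derivative^[t] P with hgdef
  -- coefficients of g
  have hgcoeff : ∀ r : ℕ, g.coeff r = ((r + t).descFactorial t : ℝ) * P.coeff (r + t) := by
    intro r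
    rw [hgdef, Polynomial.coeff_iterate_derivative, nsmul_eq_mul]
  have htop : g.coeff (j + 2) = (ℓ.descFactorial t : ℝ) := by
    rw [hgcoeff, hℓt, ← hPdeg, hPm.coeff_natDegree, mul_one, hPdeg]
  have hdesc_pos : 0 < ℓ.descFactorial t := by
    rcases Nat.eq_zero_or_pos (ℓ.descFactorial t) with h | h
    · rw [Nat.descFactorial_eq_zero_iff_lt] at h
      omega
    · exact h
  have htopne : g.coeff (j + 2) ≠ 0 := by
    rw [htop]
    exact Nat.cast_ne_zero.mpr hdesc_pos.ne'
  have hgne : g ≠ 0 := fun h => htopne (by rw [h, Polynomial.coeff_zero])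
  have hgdeg : g.natDegree = j + 2 := by
    refine le_antisymm ?_ (Polynomial.le_natDegree_of_ne_zero htopne)
    calc g.natDegree ≤ P.natDegree - t := Polynomial.natDegree_iterate_derivative P t
    _ = j + 2 := by omega
  -- root count of g
  have hgroots : ∀ m : ℕ, ℓ ≤ Multiset.card ((Polynomial.derivative^[m] P).roots) + m := by
    intro m
    induction m with
    | zero => simp [hProotsCard]
    | succ d ih =>
      have := Polynomial.card_roots_le_derivative (Polynomial.derivative^[d] P)
      rw [Function.iterate_succ_apply']
      omega
  have hgrc : Multiset.card g.roots = j + 2 := by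
    have h1' := hgroots t
    have h2' := Polynomial.card_roots' g
    rw [hgdeg] at h2'
    rw [← hgdef] at h1'
    omega
  have hfac := Polynomial.C_leadingCoeff_mul_prod_multiset_X_sub_C (p := g) (by rw [hgrc, hgdeg])
  have hlead : g.leadingCoeff = (ℓ.descFactorial t : ℝ) := by
    rw [Polynomial.leadingCoeff, hgdeg, htop]
  have hleadpos : (0:ℝ) < g.leadingCoeff := by
    rw [hlead]
    exact_mod_cast hdesc_pos
  -- enumerate roots
  obtain ⟨y, hy⟩ := multiset_exists_fn (j+2) g.roots hgrc
  set z : Fin (j+2) → ℝ := fun i => -(y i) with hzdef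
  have hprodz : (g.roots.map (fun a => Polynomial.X - Polynomial.C a)).prod
      = ∏ i ∈ (Finset.univ : Finset (Fin (j+2))), (Polynomial.X + Polynomial.C (z i)) := by
    rw [hy, Multiset.map_map, Finset.prod_eq_multiset_prod]
    congr 1
    apply Multiset.map_congr rfl
    intro i _
    simp [hzdef, sub_eq_add_neg]
  have hcardz : (Finset.univ : Finset (Fin (j+2))).card = j + 2 := by simp
  have hgc : ∀ r : ℕ, r ≤ j + 2 → g.coeff r = g.leadingCoeff * esum Finset.univ z (j + 2 - r) := by
    intro r hr
    conv_lhs => rw [← hfac]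
    rw [Polynomial.coeff_C_mul, hprodz]
    rw [esum_prod_X_add_C_coeff _ _ (by rw [hcardz]; exact hr), hcardz]
  -- transfer hypotheses through coefficients
  have hPc : ∀ r : ℕ, r ≤ 2 → P.coeff (r + t) = esum T x (j + 2 - r) := by
    intro r hr
    rw [esum_prod_X_add_C_coeff _ _ (by omega : r + t ≤ T.card)]
    congr 1
    omega
  have hz1 : esum Finset.univ z (j + 1) = 0 := by
    have e1 := hgc 1 (by omega)
    rw [hgcoeff 1, hPc 1 (by omega)] at e1
    rw [show j + 2 - 1 = j + 1 from by omega] at e1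
    rw [h2, mul_zero] at e1
    have := e1.symm
    rcases mul_eq_zero.1 this with h | h
    · exact absurd h (ne_of_gt hleadpos)
    · exact h
  have hz2 : 0 ≤ esum Finset.univ z j := by
    have e2 := hgc 2 (by omega)
    rw [hgcoeff 2, hPc 2 (by omega)] at e2
    rw [show j + 2 - 2 = j from by omega] at e2
    have hc2 : (0:ℝ) < ((2 + t).descFactorial t : ℝ) := by
      have h5 : 0 < (2+t).descFactorial t := by
        rcases Nat.eq_zero_or_pos ((2+t).descFactorial t) with h | h
        · rw [Nat.descFactorial_eq_zero_iff_lt] at h; omega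
        · exact h
      exact_mod_cast h5
    nlinarith [mul_nonneg hc2.le h1, e2, hleadpos]
  have hz0 : esum Finset.univ z (j + 2) ≤ 0 := by
    have := lemKprime (Finset.univ : Finset (Fin (j+2))) z (by rw [hcardz]; omega)
    rw [hcardz] at this
    exact this (by rw [show j + 2 - 1 = j + 1 from by omega]; exact hz1)
      (by rw [show j + 2 - 2 = j from by omega]; exact hz2)
  -- conclude
  have e0 := hgc 0 (by omega)
  rw [hgcoeff 0, hPc 0 (by omega)] at e0
  rw [show j + 2 - 0 = j + 2 from by omega] at e0
  rw [show (0:ℕ) + t = t from by omega] at e0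
  have hc0pos : (0:ℝ) < (t.descFactorial t : ℝ) := by
    have : 0 < t.descFactorial t := by
      rcases Nat.eq_zero_or_pos (t.descFactorial t) with h | h
      · rw [Nat.descFactorial_eq_zero_iff_lt] at h; omega
      · exact h
    exact_mod_cast this
  nlinarith [mul_nonpos_of_nonneg_of_nonpos (le_of_lt hleadpos) hz0]

end lemK

section lemM
variable {n k : ℕ}

lemma lemU (x : Fin n → ℝ) (hn : k + 1 ≤ n)
    (Hge : ∀ j (T : Finset (Fin n)), 1 ≤ j → j + (n - T.card) ≤ k + 1 → 0 ≤ esum T x j)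
    (Hpos : 0 < esum (Finset.univ : Finset (Fin n)) x (k+1)) :
    ∀ d r (T : Finset (Fin n)), r + d = k + 1 → 1 ≤ r → T.card + d = n →
      esum T x r = 0 → False := by
  intro d
  induction d with
  | zero =>
    intro r T hrd hr hTd h0
    have hr' : r = k + 1 := by omega
    have hT : T = Finset.univ := by
      apply Finset.eq_univ_of_card
      rw [Fintype.card_fin]
      omega
    rw [hr', hT] at h0
    rw [h0] at Hpos
    exact lt_irrefl 0 Hpos
  | succ d ih =>
    intro r T hrd hr hTd h0
    have hcompl : Tᶜ.Nonempty := by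
      apply Finset.card_pos.1
      rw [Finset.card_compl, Fintype.card_fin]
      omega
    obtain ⟨i, hi⟩ := hcompl
    have hiT : i ∉ T := Finset.mem_compl.1 hi
    have h1 : 0 ≤ esum T x (r - 1) := by
      rcases Nat.eq_or_lt_of_le hr with h | h
      · rw [← h]
        norm_num [esum_zero]
      · refine Hge (r-1) T (by omega) ?_
        omega
    have hK := lemK T x (r-1) h1 (by rw [show r - 1 + 1 = r from by omega]; exact h0)
    rw [show r - 1 + 2 = r + 1 from by omega] at hK
    have hins := esum_insert T x hiT r
    rw [h0, mul_zero, add_zero] at hins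
    have hnn : 0 ≤ esum (insert i T) x (r+1) := by
      refine Hge (r+1) (insert i T) (by omega) ?_
      rw [Finset.card_insert_of_notMem hiT]
      omega
    have hz : esum (insert i T) x (r+1) = 0 := le_antisymm (by rw [hins]; exact hK) hnn
    exact ih (r+1) (insert i T) (by omega) (by omega)
      (by rw [Finset.card_insert_of_notMem hiT]; omega) hz

lemma lemD (x : Fin n → ℝ) (hn : k + 1 ≤ n)
    (Hge : ∀ j (T : Finset (Fin n)), 1 ≤ j → j + (n - T.card) ≤ k + 1 → 0 ≤ esum T x j)
    (Hpos : 0 < esum (Finset.univ : Finset (Fin n)) x (k+1)) :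
    ∀ c (T : Finset (Fin n)) (j : ℕ), T.card = c → 1 ≤ j → j + (n - c) ≤ k + 1 →
      esum T x j = 0 → False := by
  intro c
  induction c using Nat.strong_induction_on with
  | _ c ih =>
    intro T j hTc hj hfam h0
    have hcn : c ≤ n := by
      have := Finset.card_le_univ T
      rw [Fintype.card_fin] at this
      omega
    by_cases hb : j + (n - c) = k + 1
    · exact lemU x hn Hge Hpos (n - c) j T hb hj (by omega) h0
    · have hlt : j + (n - c) ≤ k := by omega
      have hc1 : 1 ≤ c := by omega
      have hsum := esum_sum_erase T x j
      rw [hTc, h0, mul_zero] at hsum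
      have hnn : ∀ i ∈ T, 0 ≤ esum (T.erase i) x j := by
        intro i hi
        refine Hge j (T.erase i) hj ?_
        rw [Finset.card_erase_of_mem hi, hTc]
        omega
      have hall := (Finset.sum_eq_zero_iff_of_nonneg hnn).1 hsum
      obtain ⟨i, hi⟩ := Finset.card_pos.1 (show 0 < T.card by omega)
      exact ih (c-1) (by omega) (T.erase i) j
        (by rw [Finset.card_erase_of_mem hi, hTc]) hj (by omega) (hall i hi)

lemma lemM (x : Fin n → ℝ) (hn : k + 1 ≤ n)
    (Hge : ∀ j (T : Finset (Fin n)), 1 ≤ j → j + (n - T.card) ≤ k + 1 → 0 ≤ esum T x j)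
    (Hpos : 0 < esum (Finset.univ : Finset (Fin n)) x (k+1)) :
    ∀ j (T : Finset (Fin n)), 1 ≤ j → j + (n - T.card) ≤ k + 1 → 0 < esum T x j := by
  intro j T hj hfam
  rcases lt_or_eq_of_le (Hge j T hj hfam) with h | h
  · exact h
  · exact absurd (h.symm) (fun h0 => lemD x hn Hge Hpos T.card T j rfl hj hfam h0)

end lemM

section pderivPart
variable {n : ℕ}

lemma eval_esymmS_s12 (x : Fin n → ℝ) (T : Finset (Fin n)) (r : ℕ) :
    MvPolynomial.eval x (esymmS T r) = esum T x r := by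
  rw [esymmS, esum, map_sum]
  refine Finset.sum_congr rfl fun A _ => ?_
  rw [map_prod]
  simp

lemma pderiv_prod_X (a : Fin n) (A : Finset (Fin n)) :
    pderiv a (∏ i ∈ A, (MvPolynomial.X i : MvPolynomial (Fin n) ℝ))
      = if a ∈ A then ∏ i ∈ A.erase a, MvPolynomial.X i else 0 := by
  induction A using Finset.induction_on with
  | empty => simp [pderiv_one]
  | @insert b B hb ih =>
    rw [Finset.prod_insert hb, pderiv_mul, ih]
    by_cases hab : a = b
    · subst hab
      rw [pderiv_X_self, if_neg hb, if_pos (Finset.mem_insert_self a B), Finset.erase_insert hb]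
      ring
    · rw [pderiv_X_of_ne (fun h => hab h.symm)]
      by_cases haB : a ∈ B
      · rw [if_pos haB, if_pos (Finset.mem_insert_of_mem haB),
          Finset.erase_insert_of_ne (fun h => hab h.symm) ,
          Finset.prod_insert (fun hc => hb (Finset.mem_of_mem_erase hc))]
        ring
      · rw [if_neg haB, if_neg (fun hc => by
          rcases Finset.mem_insert.1 hc with h | h
          · exact hab h
          · exact haB h)]
        ring

lemma pderiv_esymmS (a : Fin n) (T : Finset (Fin n)) (r : ℕ) (ha : a ∈ T) :
    pderiv a (esymmS T (r+1)) = esymmS (T.erase a) r := by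
  rw [esymmS, map_sum]
  simp_rw [pderiv_prod_X]
  rw [Finset.sum_ite, Finset.sum_const_zero, add_zero, esymmS]
  refine Finset.sum_nbij' (fun A => A.erase a) (fun B => insert a B) ?_ ?_ ?_ ?_ ?_
  · intro A hA
    rw [Finset.mem_filter, Finset.mem_powersetCard] at hA
    rw [Finset.mem_powersetCard]
    constructor
    · exact fun i hi => Finset.mem_erase.2 ⟨(Finset.mem_erase.1 hi).1,
        hA.1.1 (Finset.mem_of_mem_erase hi)⟩
    · rw [Finset.card_erase_of_mem hA.2, hA.1.2]
      omega
  · intro B hB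
    rw [Finset.mem_powersetCard] at hB
    rw [Finset.mem_filter, Finset.mem_powersetCard]
    have haB : a ∉ B := fun hc => (Finset.mem_erase.1 (hB.1 hc)).1 rfl
    refine ⟨⟨?_, ?_⟩, Finset.mem_insert_self a B⟩
    · intro i hi
      rcases Finset.mem_insert.1 hi with h | h
      · exact h ▸ ha
      · exact Finset.mem_of_mem_erase (hB.1 h)
    · rw [Finset.card_insert_of_notMem haB, hB.2]
  · intro A hA
    rw [Finset.mem_filter] at hA
    exact Finset.insert_erase hA.2
  · intro B hB
    rw [Finset.mem_powersetCard] at hB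
    have haB : a ∉ B := fun hc => (Finset.mem_erase.1 (hB.1 hc)).1 rfl
    exact Finset.erase_insert haB
  · intro A hA
    rfl

lemma foldr_pderiv_esymmS : ∀ (l : List (Fin n)) (T : Finset (Fin n)) (r : ℕ),
    l.Nodup → (∀ a ∈ l, a ∈ T) → l.length ≤ r →
    l.foldr (fun j q => pderiv j q) (esymmS T r) = esymmS (T \ l.toFinset) (r - l.length) := by
  intro l
  induction l with
  | nil =>
    intro T r _ _ _
    simp
  | cons a l ih =>
    intro T r hnd hsub hlen
    rw [List.length_cons] at hlen
    rw [List.foldr_cons, ih T r (List.nodup_cons.1 hnd).2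
      (fun b hb => hsub b (List.mem_cons_of_mem a hb)) (by omega)]
    have ha : a ∈ T \ l.toFinset := by
      rw [Finset.mem_sdiff]
      exact ⟨hsub a (List.mem_cons_self), fun hc =>
        (List.nodup_cons.1 hnd).1 (List.mem_toFinset.1 hc)⟩
    have hr1 : r - l.length = (r - (l.length + 1)) + 1 := by omega
    rw [hr1, pderiv_esymmS a _ _ ha]
    congr 1
    · ext b
      simp only [Finset.mem_erase, Finset.mem_sdiff, List.toFinset_cons, Finset.mem_insert,
        List.mem_toFinset]
      tauto

lemma pderivS_esymmS (S : Finset (Fin n)) (r : ℕ) (h : S.card ≤ r) :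
    S.toList.foldr (fun j q => pderiv j q) (esymmS Finset.univ r)
      = esymmS (Finset.univ \ S) (r - S.card) := by
  rw [foldr_pderiv_esymmS S.toList Finset.univ r (Finset.nodup_toList S)
    (fun a _ => Finset.mem_univ a) (by rw [Finset.length_toList]; exact h)]
  rw [Finset.toList_toFinset, Finset.length_toList]

end pderivPart

section Topology
variable (n k : ℕ)

def U0 : Set (Fin n → ℝ) :=
  {x | ∀ (j : ℕ) (T : Finset (Fin n)), 1 ≤ j → j + (n - T.card) ≤ k + 1 → 0 < esum T x j}

def V0 : Set (Fin n → ℝ) :=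
  {x | ∀ (j : ℕ) (T : Finset (Fin n)), 1 ≤ j → j + (n - T.card) ≤ k + 1 → 0 ≤ esum T x j}

variable {n k}

lemma continuous_esum (T : Finset (Fin n)) (j : ℕ) :
    Continuous fun x : Fin n → ℝ => esum T x j := by
  refine continuous_finset_sum _ fun A _ => continuous_finset_prod _ fun i _ => continuous_apply i

lemma isOpen_U0 : IsOpen (U0 n k) := by
  have hrw : U0 n k = ⋂ (j : Fin (k+2)), ⋂ (T : Finset (Fin n)),
      {x | 1 ≤ (j:ℕ) → (j:ℕ) + (n - T.card) ≤ k + 1 → 0 < esum T x (j:ℕ)} := by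
    ext x
    simp only [Set.mem_iInter, Set.mem_setOf_eq, U0]
    constructor
    · intro h j T h1 h2
      exact h j T h1 h2
    · intro h j T h1 h2
      have hjk : j < k + 2 := by omega
      exact h ⟨j, hjk⟩ T h1 h2
  rw [hrw]
  refine isOpen_iInter_of_finite fun j => isOpen_iInter_of_finite fun T => ?_
  by_cases hcond : (1 ≤ (j:ℕ)) ∧ ((j:ℕ) + (n - T.card) ≤ k + 1)
  · have : {x : Fin n → ℝ | 1 ≤ (j:ℕ) → (j:ℕ) + (n - T.card) ≤ k + 1 → 0 < esum T x (j:ℕ)}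
        = {x | 0 < esum T x (j:ℕ)} := by
      ext x
      simp [hcond.1, hcond.2]
    rw [this]
    exact isOpen_lt continuous_const (continuous_esum T j)
  · have : {x : Fin n → ℝ | 1 ≤ (j:ℕ) → (j:ℕ) + (n - T.card) ≤ k + 1 → 0 < esum T x (j:ℕ)}
        = Set.univ := by
      rw [Set.eq_univ_iff_forall]
      intro x h1 h2
      exact absurd ⟨h1, h2⟩ hcond
    rw [this]
    exact isOpen_univ

lemma isClosed_V0 : IsClosed (V0 n k) := by
  have hrw : V0 n k = ⋂ (j : ℕ), ⋂ (T : Finset (Fin n)),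
      {x | 1 ≤ j → j + (n - T.card) ≤ k + 1 → 0 ≤ esum T x j} := by
    ext x
    simp only [Set.mem_iInter, Set.mem_setOf_eq, V0]
  rw [hrw]
  refine isClosed_iInter fun j => isClosed_iInter fun T => ?_
  by_cases hcond : (1 ≤ j) ∧ (j + (n - T.card) ≤ k + 1)
  · have : {x : Fin n → ℝ | 1 ≤ j → j + (n - T.card) ≤ k + 1 → 0 ≤ esum T x j}
        = {x | 0 ≤ esum T x j} := by
      ext x
      simp [hcond.1, hcond.2]
    rw [this]
    exact isClosed_le continuous_const (continuous_esum T j)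
  · have : {x : Fin n → ℝ | 1 ≤ j → j + (n - T.card) ≤ k + 1 → 0 ≤ esum T x j}
        = Set.univ := by
      rw [Set.eq_univ_iff_forall]
      intro x h1 h2
      exact absurd ⟨h1, h2⟩ hcond
    rw [this]
    exact isClosed_univ

lemma esum_one_pos (T : Finset (Fin n)) (r : ℕ) (h : r ≤ T.card) :
    0 < esum T (1 : Fin n → ℝ) r := by
  have : esum T (1 : Fin n → ℝ) r = ((T.powersetCard r).card : ℝ) := by
    rw [esum]
    rw [Finset.sum_congr rfl (fun A _ => by simp : ∀ A ∈ T.powersetCard r,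
      ∏ i ∈ A, (1 : Fin n → ℝ) i = 1)]
    rw [Finset.sum_const, nsmul_eq_mul, mul_one]
  rw [this]
  have := Finset.card_pos.2 (Finset.powersetCard_nonempty.2 h)
  exact_mod_cast this

end Topology


/-- For `1 ≤ k ≤ n-1` and `S ⊆ [n]` with `|S| ≤ k-1`,
`Λ₊(e_{k+1}, 1) ⊆ Λ₊(∂^S e_k, 1)`. -/
theorem hypCone_esymm_subset_pderiv {n : ℕ} (k : ℕ) (hk : 1 ≤ k) (hkn : k ≤ n - 1)
    (S : Finset (Fin n)) (hS : S.card ≤ k - 1) :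
    hypCone (esymmS (Finset.univ : Finset (Fin n)) (k + 1)) 1 ⊆
      hypCone (pderivS S (esymmS (Finset.univ : Finset (Fin n)) k)) 1 := by
  classical
  have hn : k + 1 ≤ n := by omega
  have hSk : S.card ≤ k - 1 := hS
  have hScard_n : S.card ≤ n := by
    have := Finset.card_le_univ S
    rwa [Fintype.card_fin] at this
  have hq : pderivS S (esymmS (Finset.univ : Finset (Fin n)) k)
      = esymmS (Finset.univ \ S) (k - S.card) := by
    rw [pderivS]
    exact pderivS_esymmS S k (by omega)
  set p := esymmS (Finset.univ : Finset (Fin n)) (k+1) with hp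
  set q := pderivS S (esymmS (Finset.univ : Finset (Fin n)) k) with hqdef
  set Ω : Set (Fin n → ℝ) := {x | eval x p ≠ 0} with hΩ
  have hcard_univ : (Finset.univ : Finset (Fin n)).card = n := by
    simp
  have h1Ω : (1 : Fin n → ℝ) ∈ Ω := by
    rw [hΩ, Set.mem_setOf_eq, hp, eval_esymmS_s12]
    have := esum_one_pos (Finset.univ : Finset (Fin n)) (k+1) (by omega)
    exact ne_of_gt this
  have hU1 : (1 : Fin n → ℝ) ∈ U0 n k := by
    intro j T hj hfam
    have hTn : T.card ≤ n := by
      have := Finset.card_le_univ T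
      rwa [Fintype.card_fin] at this
    exact esum_one_pos T j (by omega)
  have hM : ∀ x, x ∈ Ω → x ∈ closure (U0 n k) → x ∈ U0 n k := by
    intro x hx hcl
    have hge : x ∈ V0 n k := by
      have hsub : U0 n k ⊆ V0 n k := fun y hy j T hj hfam => le_of_lt (hy j T hj hfam)
      exact closure_minimal hsub isClosed_V0 hcl
    have Hge : ∀ j (T : Finset (Fin n)), 1 ≤ j → j + (n - T.card) ≤ k + 1 → 0 ≤ esum T x j :=
      fun j T hj hfam => hge j T hj hfam
    have Hpos : 0 < esum (Finset.univ : Finset (Fin n)) x (k+1) := by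
      have h0 : 0 ≤ esum (Finset.univ : Finset (Fin n)) x (k+1) :=
        Hge (k+1) Finset.univ (by omega) (by rw [hcard_univ]; omega)
      rcases lt_or_eq_of_le h0 with h | h
      · exact h
      · exfalso
        apply hx
        rw [hp, eval_esymmS_s12]
        exact h.symm
    exact fun j T hj hfam => lemM x hn Hge Hpos j T hj hfam
  set A := connectedComponentIn Ω 1 with hA
  have hA1 : (1 : Fin n → ℝ) ∈ A := mem_connectedComponentIn h1Ω
  have hAsub : A ⊆ Ω := connectedComponentIn_subset _ _
  have hAU0 : A ⊆ U0 n k := by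
    have hsub : A ⊆ U0 n k ∪ (closure (U0 n k))ᶜ := by
      intro x hx
      by_cases h : x ∈ closure (U0 n k)
      · exact Or.inl (hM x (hAsub hx) h)
      · exact Or.inr h
    have hdisj : Disjoint (U0 n k) (closure (U0 n k))ᶜ :=
      Set.disjoint_left.mpr fun x hx hxc => hxc (subset_closure hx)
    rcases IsPreconnected.subset_or_subset isOpen_U0 (isOpen_compl_iff.2 isClosed_closure)
      hdisj hsub isPreconnected_connectedComponentIn with h | h
    · exact h
    · exact absurd (subset_closure hU1) (h hA1)
  have hAq : A ⊆ {x | eval x q ≠ 0} := by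
    intro x hx
    rw [Set.mem_setOf_eq, hq, eval_esymmS_s12]
    have hcarddiff : (Finset.univ \ S).card = n - S.card := by
      rw [Finset.card_sdiff_of_subset (Finset.subset_univ S), hcard_univ]
    refine ne_of_gt (hAU0 hx (k - S.card) (Finset.univ \ S) (by omega) ?_)
    rw [hcarddiff]
    omega
  have hfinal : A ⊆ connectedComponentIn {x | eval x q ≠ 0} 1 :=
    IsPreconnected.subset_connectedComponentIn isPreconnected_connectedComponentIn hA1 hAq
  show closure A ⊆ closure (connectedComponentIn {x | eval x q ≠ 0} 1)
  exact closure_mono hfinal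
end Aux
end
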